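/- The full frame-averaged invariant prediction ⟨Φ⟩(X) = (1/8) Σ_{(U,t) ∈ F(X)} Φ((X − 1tᵀ)U) is E(3)-invariant: ⟨Φ⟩(XRᵀ + 1bᵀ) = ⟨Φ⟩(X) for all R ∈ O(3), b ∈ ℝ³. -/
import Mathlib


open Matrix
open scoped BigOperators

/-- The rank-one matrix `1 tᵀ` whose rows all equal `t`. -/
def onesT {n : ℕ} (t : Fin 3 → ℝ) : Matrix (Fin n) (Fin 3) ℝ :=
  Matrix.of fun _ j => t j

/-- The centroid `t = (1/n) Xᵀ 1` of the rows of `X`. -/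
noncomputable def centroid {n : ℕ} (X : Matrix (Fin n) (Fin 3) ℝ) : Fin 3 → ℝ :=
  (n : ℝ)⁻¹ • (Xᵀ *ᵥ fun _ => (1 : ℝ))

/-- The covariance matrix `Σ(X) = (X − 1tᵀ)ᵀ (X − 1tᵀ)` of `X` about its centroid. -/
noncomputable def cov {n : ℕ} (X : Matrix (Fin n) (Fin 3) ℝ) :
    Matrix (Fin 3) (Fin 3) ℝ :=
  (X - onesT (centroid X))ᵀ * (X - onesT (centroid X))

/-- Sign `±1` attached to a Boolean. -/
def signOf (e : Bool) : ℝ := if e then 1 else -1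

/-- The frame matrix `[ε₁u₁, ε₂u₂, ε₃u₃]` with columns the signed
eigenvectors. -/
def signedU (u : Fin 3 → (Fin 3 → ℝ)) (ε : Fin 3 → Bool) :
    Matrix (Fin 3) (Fin 3) ℝ :=
  Matrix.of fun i j => signOf (ε j) * u j i

/-- Full frame-averaged invariant (scalar) prediction over the 8-element PCA
frame. -/
noncomputable def faInv {n : ℕ}
    (Φ : Matrix (Fin n) (Fin 3) ℝ → ℝ)
    (u : Fin 3 → (Fin 3 → ℝ)) (X : Matrix (Fin n) (Fin 3) ℝ) : ℝ :=
  (8 : ℝ)⁻¹ * ∑ ε : Fin 3 → Bool,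
    Φ ((X - onesT (centroid X)) * signedU u ε)

lemma signOf_mul_signOf (a b : Bool) : signOf a * signOf b = signOf (a == b) := by
  cases a <;> cases b <;> simp [signOf]

lemma signOf_sq (a : Bool) : signOf a * signOf a = 1 := by
  cases a <;> simp [signOf]

/-- The full frame-averaged invariant prediction over the 8-element PCA frame is
`E(3)`-invariant: `⟨Φ⟩(XRᵀ + 1bᵀ) = ⟨Φ⟩(X)`. Here `u` is an orthonormal
eigenbasis of `Σ(X)` with decreasing eigenvalues, and `v` any corresponding
eigenbasis of `Σ(XRᵀ + 1bᵀ)`. -/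
theorem faInv_E3_invariant {n : ℕ} (hn : 0 < n)
    (X : Matrix (Fin n) (Fin 3) ℝ)
    (Φ : Matrix (Fin n) (Fin 3) ℝ → ℝ)
    (lam : Fin 3 → ℝ) (hlam01 : lam 1 < lam 0) (hlam12 : lam 2 < lam 1)
    (u : Fin 3 → (Fin 3 → ℝ))
    (hortho : ∀ i j, u i ⬝ᵥ u j = if i = j then 1 else 0)
    (heig : ∀ j, cov X *ᵥ u j = lam j • u j)
    (R : Matrix (Fin 3) (Fin 3) ℝ) (hR : Rᵀ * R = 1) (hR' : R * Rᵀ = 1)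
    (b : Fin 3 → ℝ) :
    ∀ v : Fin 3 → (Fin 3 → ℝ),
      (∀ i j, v i ⬝ᵥ v j = if i = j then 1 else 0) →
      (∀ j, cov (X * Rᵀ + onesT b) *ᵥ v j = lam j • v j) →
      faInv Φ v (X * Rᵀ + onesT b) = faInv Φ u X := by
  intro v hvortho hveig
  have hlamne : ∀ i j : Fin 3, i ≠ j → lam i ≠ lam j := by
    intro i j hij
    fin_cases i <;> fin_cases j <;> simp_all <;> linarith
  -- centroid transforms affinely
  have hcent : centroid (X * Rᵀ + onesT b) = R *ᵥ centroid X + b := by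
    funext i
    have h1 : ((onesT b : Matrix (Fin n) (Fin 3) ℝ)ᵀ *ᵥ fun _ => (1:ℝ)) i
        = (n : ℝ) * b i := by
      simp [onesT, Matrix.mulVec, dotProduct, Finset.sum_const]
    have h2 : ((X * Rᵀ)ᵀ *ᵥ fun _ => (1:ℝ)) = R *ᵥ (Xᵀ *ᵥ fun _ => (1:ℝ)) := by
      rw [Matrix.transpose_mul, Matrix.transpose_transpose, ← Matrix.mulVec_mulVec]
    have hn' : (n : ℝ) ≠ 0 := Nat.cast_ne_zero.mpr hn.ne'
    simp only [centroid, Matrix.transpose_add, Matrix.add_mulVec, Pi.smul_apply,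
      Pi.add_apply, h1, h2, smul_eq_mul, Matrix.mulVec_smul]
    rw [mul_add, ← mul_assoc, inv_mul_cancel₀ hn', one_mul]
  -- centered matrix transforms linearly
  have hcentered : (X * Rᵀ + onesT b) - onesT (centroid (X * Rᵀ + onesT b))
      = (X - onesT (centroid X)) * Rᵀ := by
    rw [hcent]
    have honesmul : (onesT (centroid X) : Matrix (Fin n) (Fin 3) ℝ) * Rᵀ
        = onesT (R *ᵥ centroid X) := by
      ext i j
      simp [onesT, Matrix.mul_apply, Matrix.mulVec, dotProduct, mul_comm]
    have hadd : (onesT (R *ᵥ centroid X + b) : Matrix (Fin n) (Fin 3) ℝ)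
        = onesT (R *ᵥ centroid X) + onesT b := by
      ext i j; simp [onesT]
    rw [hadd, Matrix.sub_mul, honesmul]
    abel
  -- covariance conjugates
  have hcov : cov (X * Rᵀ + onesT b) = R * cov X * Rᵀ := by
    rw [cov, hcentered, Matrix.transpose_mul, Matrix.transpose_transpose, cov]
    rw [Matrix.mul_assoc, Matrix.mul_assoc, Matrix.mul_assoc]
  have hcovsymm : (cov X)ᵀ = cov X := by
    rw [cov, Matrix.transpose_mul, Matrix.transpose_transpose]
  -- Rᵀ vⱼ is a unit eigenvector of cov X with eigenvalue lam j
  have hweig : ∀ j, cov X *ᵥ (Rᵀ *ᵥ v j) = lam j • (Rᵀ *ᵥ v j) := by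
    intro j
    have h := hveig j
    rw [hcov] at h
    have h2 := congrArg (fun x => Rᵀ *ᵥ x) h
    simp only [Matrix.mulVec_mulVec, Matrix.mulVec_smul] at h2 ⊢
    rw [← Matrix.mul_assoc, ← Matrix.mul_assoc, hR, Matrix.one_mul] at h2
    exact h2
  have hwdot : ∀ i j, (Rᵀ *ᵥ v i) ⬝ᵥ (Rᵀ *ᵥ v j) = v i ⬝ᵥ v j := by
    intro i j
    rw [Matrix.mulVec_transpose, Matrix.dotProduct_mulVec, Matrix.vecMul_vecMul,
      hR', Matrix.vecMul_one]
  -- each Rᵀ vⱼ is ± uⱼ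
  have hsign : ∀ j, ∃ c : ℝ, (c = 1 ∨ c = -1) ∧ Rᵀ *ᵥ v j = c • u j := by
    intro j
    obtain ⟨w, hw⟩ : ∃ w, Rᵀ *ᵥ v j = w := ⟨_, rfl⟩
    have hwe : cov X *ᵥ w = lam j • w := by rw [← hw]; exact hweig j
    have hwn : w ⬝ᵥ w = 1 := by rw [← hw, hwdot, hvortho]; simp
    -- coefficients
    have hcoef : ∀ i, i ≠ j → u i ⬝ᵥ w = 0 := by
      intro i hij
      have h1 : (cov X *ᵥ u i) ⬝ᵥ w = u i ⬝ᵥ (cov X *ᵥ w) := by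
        rw [Matrix.dotProduct_mulVec, ← hcovsymm, Matrix.vecMul_transpose, hcovsymm]
      rw [heig i, hwe, smul_dotProduct, dotProduct_smul] at h1
      have := hlamne i j hij
      have h2 : (lam i - lam j) * (u i ⬝ᵥ w) = 0 := by
        rw [sub_mul]; rw [smul_eq_mul, smul_eq_mul] at h1; linarith
      rcases mul_eq_zero.mp h2 with h | h
      · exact absurd (by linarith) this
      · exact h
    -- completeness of u
    set U : Matrix (Fin 3) (Fin 3) ℝ := Matrix.of u with hU
    have hUUt : U * Uᵀ = 1 := by
      ext i k
      simp only [Matrix.mul_apply, Matrix.transpose_apply, Matrix.one_apply, hU,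
        Matrix.of_apply]
      simpa [dotProduct] using hortho i k
    have hUtU : Uᵀ * U = 1 := mul_eq_one_comm.mp hUUt
    have hwexp : w = (u j ⬝ᵥ w) • u j := by
      have h1 : Uᵀ *ᵥ (U *ᵥ w) = w := by
        rw [Matrix.mulVec_mulVec, hUtU, Matrix.one_mulVec]
      funext k
      have h2 := congrFun h1 k
      rw [← h2]
      simp only [Matrix.mulVec, dotProduct, Matrix.transpose_apply, hU, Matrix.of_apply]
      rw [Finset.sum_eq_single j]
      · simp [dotProduct, mul_comm]
      · intro i _ hij
        rw [show (∑ x, u i x * w x) = u i ⬝ᵥ w from rfl, hcoef i hij, mul_zero]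
      · intro h; exact absurd (Finset.mem_univ j) h
    refine ⟨u j ⬝ᵥ w, ?_, hw ▸ hwexp⟩
    have hc2 : (u j ⬝ᵥ w) * (u j ⬝ᵥ w) = 1 := by
      have := hwn
      rw [hwexp] at this
      rw [smul_dotProduct, dotProduct_smul, hortho] at this
      simpa using this
    exact mul_self_eq_one_iff.mp hc2
  choose c hc1 hc2 using hsign
  -- boolean signs
  set s : Fin 3 → Bool := fun j => decide (c j = 1) with hs
  have hcs : ∀ j, c j = signOf (s j) := by
    intro j
    rcases hc1 j with h | h
    · simp [hs, h, signOf]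
    · have hne : c j ≠ 1 := by rw [h]; norm_num
      rw [hs]
      simp only [hne, decide_eq_false, signOf]
      rw [if_neg (by simp), h]
  -- the key matrix identity
  have hkey : ∀ ε : Fin 3 → Bool,
      Rᵀ * signedU v ε = signedU u (fun j => ε j == s j) := by
    intro ε
    ext i j
    have hv := congrFun (hc2 j) i
    simp only [Matrix.mulVec, dotProduct, Pi.smul_apply, smul_eq_mul] at hv
    simp only [Matrix.mul_apply, signedU, Matrix.of_apply]
    calc ∑ k, Rᵀ i k * (signOf (ε j) * v j k)
        = signOf (ε j) * ∑ k, Rᵀ i k * v j k := by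
          rw [Finset.mul_sum]; congr 1; funext k; ring
      _ = signOf (ε j) * (c j * u j i) := by rw [hv]
      _ = signOf (ε j == s j) * u j i := by
          rw [hcs j, ← signOf_mul_signOf]; ring
  -- reindexing the sum
  have hterm : ∀ ε : Fin 3 → Bool,
      ((X * Rᵀ + onesT b) - onesT (centroid (X * Rᵀ + onesT b))) * signedU v ε
      = (X - onesT (centroid X)) * signedU u (fun j => ε j == s j) := by
    intro ε
    rw [hcentered, Matrix.mul_assoc, hkey]
  have hinv : Function.Involutive (fun (ε : Fin 3 → Bool) (j : Fin 3) => ε j == s j) := by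
    intro ε
    funext j
    cases h : ε j <;> cases h2 : s j <;> simp [h, h2]
  unfold faInv
  congr 1
  calc ∑ ε : Fin 3 → Bool,
        Φ (((X * Rᵀ + onesT b) - onesT (centroid (X * Rᵀ + onesT b))) * signedU v ε)
      = ∑ ε : Fin 3 → Bool,
        Φ ((X - onesT (centroid X)) * signedU u ((Function.Involutive.toPerm _ hinv) ε)) := by
        apply Finset.sum_congr rfl
        intro ε _
        rw [hterm]
        rfl
    _ = ∑ ε : Fin 3 → Bool, Φ ((X - onesT (centroid X)) * signedU u ε) :=
        Equiv.sum_comp (Function.Involutive.toPerm _ hinv)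
          (fun ε => Φ ((X - onesT (centroid X)) * signedU u ε))
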